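/- Assume Λ is radially convex in the control variable, bounded on the bounded sets that are well-inside Dom(Λ), and let Q be a selection of ∂_r Λ(s,y,ru)_{r=1}. Then for every c > 0, ρ > 0 and K ≥ 0, the infimum of Λ(s,y,u) − Q(s,y,u) over the set {(s,y,u) ∈ Dom(Λ) : s ∈ [0,T], |y| ≤ K, u ∈ 𝒰, |u| < c, dist((s,y,u), ∂Dom(Λ)) ≥ ρ} is strictly greater than −∞. -/

import Mathlib

open MeasureTheory Set Filter
open scoped ENNReal NNReal

noncomputable section

/-- Euclidean space `ℝ^k`. -/
abbrev Vec (k : ℕ) : Type := EuclideanSpace ℝ (Fin k)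

/-- The control set is a nonempty cone. -/
def IsCone {k : ℕ} (U : Set (Vec k)) : Prop :=
  U.Nonempty ∧ ∀ u ∈ U, ∀ c : ℝ, 0 < c → c • u ∈ U

variable {n m : ℕ}

/-- The effective domain of the Lagrangian, inside `[0,T] × ℝⁿ × ℝᵐ`. -/
def domSet (T : ℝ) (L : ℝ → Vec n → Vec m → ℝ≥0∞) : Set (ℝ × Vec n × Vec m) :=
  {p | p.1 ∈ Icc 0 T ∧ L p.1 p.2.1 p.2.2 ≠ ⊤}

/-- Boundary of the effective domain relative to `[0,T] × ℝⁿ × ℝᵐ`. -/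
def bdryDom (T : ℝ) (L : ℝ → Vec n → Vec m → ℝ≥0∞) : Set (ℝ × Vec n × Vec m) :=
  closure (domSet T L) ∩
    closure ((Icc (0:ℝ) T ×ˢ (univ : Set (Vec n × Vec m))) \ domSet T L)

/-- Distance to the boundary of the effective domain. -/
def distBdry (T : ℝ) (L : ℝ → Vec n → Vec m → ℝ≥0∞) (p : ℝ × Vec n × Vec m) : ℝ :=
  Metric.infDist p (bdryDom T L)

/-- The effective domain is strictly star-shaped in the control variable. -/
def StarShapedDom (T : ℝ) (L : ℝ → Vec n → Vec m → ℝ≥0∞) : Prop :=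
  ∀ᵐ s ∂(volume : Measure ℝ), s ∈ Icc (0:ℝ) T → ∀ (y : Vec n) (u : Vec m),
    L s y u ≠ ⊤ → ∀ r : ℝ, 0 < r → r ≤ 1 → L s y (r • u) ≠ ⊤

/-- Linear growth from below: `L(s,y,u) ≥ α‖u‖ − d` for `u ∈ U`. -/
def LinearGrowth (T : ℝ) (L : ℝ → Vec n → Vec m → ℝ≥0∞) (U : Set (Vec m))
    (α d : ℝ) : Prop :=
  ∀ᵐ s ∂(volume : Measure ℝ), s ∈ Icc (0:ℝ) T → ∀ y : Vec n, ∀ u ∈ U,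
    ENNReal.ofReal (α * ‖u‖ - d) ≤ L s y u

/-- Condition (S), with explicit constants `κ, A, γ, ε`. -/
def ConditionSWith (T : ℝ) (L : ℝ → Vec n → Vec m → ℝ≥0∞) (U : Set (Vec m))
    (κ A : ℝ) (γ : ℝ → ℝ) (ε : ℝ) : Prop :=
  0 ≤ κ ∧ 0 ≤ A ∧ (∀ s, 0 ≤ γ s) ∧ IntegrableOn γ (Icc 0 T) ∧ 0 < ε ∧
  ∀ᵐ s ∂(volume : Measure ℝ), s ∈ Icc (0:ℝ) T →
    ∀ s₁ ∈ Icc (s - ε) (s + ε) ∩ Icc (0:ℝ) T, ∀ s₂ ∈ Icc (s - ε) (s + ε) ∩ Icc (0:ℝ) T,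
    ∀ y : Vec n, ∀ u ∈ U, L s₁ y u ≠ ⊤ → L s₂ y u ≠ ⊤ →
      ENNReal.ofReal |(L s₂ y u).toReal - (L s₁ y u).toReal| ≤
        (ENNReal.ofReal κ * L s y u + ENNReal.ofReal (A * ‖u‖ + γ s)) *
          ENNReal.ofReal |s₂ - s₁|

/-- The constant `c_t(B) = (B + d(T−t))/(α(T−t))`. -/
def cLow (T α d B t : ℝ) : ℝ := (B + d * (T - t)) / (α * (T - t))

/-- The constant `Φ(B) = κB + (A/α)(B + dT) + ‖γ‖₁`. -/
def PhiB (T κ A : ℝ) (γ : ℝ → ℝ) (α d B : ℝ) : ℝ :=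
  κ * B + A / α * (B + d * T) + ∫ s in Icc (0:ℝ) T, γ s

/-- Radial convexity in the control variable. -/
def RadiallyConvex (T : ℝ) (L : ℝ → Vec n → Vec m → ℝ≥0∞) (U : Set (Vec m)) : Prop :=
  ∀ᵐ s ∂(volume : Measure ℝ), s ∈ Icc (0:ℝ) T → ∀ y : Vec n, ∀ u ∈ U,
    ∀ r₁ r₂ : ℝ, 0 < r₁ → 0 < r₂ → ∀ a c : ℝ, 0 ≤ a → 0 ≤ c → a + c = 1 →
      L s y ((a * r₁ + c * r₂) • u) ≤
        ENNReal.ofReal a * L s y (r₁ • u) + ENNReal.ofReal c * L s y (r₂ • u)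

/-- A selection of the radial convex subdifferential `∂_r L(s,y,ru)` at `r = 1`. -/
def IsRadialSelection (T : ℝ) (L : ℝ → Vec n → Vec m → ℝ≥0∞) (U : Set (Vec m))
    (Q : ℝ → Vec n → Vec m → ℝ) : Prop :=
  ∀ s ∈ Icc (0:ℝ) T, ∀ y : Vec n, ∀ u ∈ U, L s y u ≠ ⊤ → ∀ r : ℝ, 0 < r →
    ENNReal.ofReal ((L s y u).toReal + Q s y u * (r - 1)) ≤ L s y (r • u)

/-- `L` is bounded on the bounded sets that are well-inside its domain. -/
def BddWellInside (T : ℝ) (L : ℝ → Vec n → Vec m → ℝ≥0∞) : Prop :=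
  ∀ C > (0:ℝ), ∀ ρ > (0:ℝ), ∃ M : ℝ,
    ∀ s ∈ Icc (0:ℝ) T, ∀ (y : Vec n) (u : Vec m), L s y u ≠ ⊤ →
      ‖y‖ + ‖u‖ ≤ C → ρ ≤ distBdry T L (s, y, u) → L s y u ≤ ENNReal.ofReal M

/-- Condition (H_B^δ), radial convex form. -/
def ConditionH (T : ℝ) (L : ℝ → Vec n → Vec m → ℝ≥0∞) (U : Set (Vec m))
    (α d κ A : ℝ) (γ : ℝ → ℝ) (δ B : ℝ) : Prop :=
  ∀ K ≥ (0:ℝ), ∃ ν > (0:ℝ), ∃ c > cLow T α d B δ, ∃ Q : ℝ → Vec n → Vec m → ℝ,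
    IsRadialSelection T L U Q ∧
    ∀ ρ > (0:ℝ), ∃ Sup Inf : ℝ,
      (∀ s ∈ Icc (0:ℝ) T, ∀ y : Vec n, ‖y‖ ≤ K → ∀ u ∈ U, ν ≤ ‖u‖ → L s y u ≠ ⊤ →
        (L s y u).toReal - Q s y u ≤ Sup) ∧
      (∀ s ∈ Icc (0:ℝ) T, ∀ y : Vec n, ‖y‖ ≤ K → ∀ u ∈ U, ‖u‖ < c → L s y u ≠ ⊤ →
        ρ ≤ distBdry T L (s, y, u) → Inf ≤ (L s y u).toReal - Q s y u) ∧
      Sup + 2 * PhiB T κ A γ α d B < Inf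

/-- Condition (M_B^δ), radial convex form. -/
def ConditionM (T : ℝ) (L : ℝ → Vec n → Vec m → ℝ≥0∞) (U : Set (Vec m))
    (α d : ℝ) (δ B : ℝ) : Prop :=
  ∀ K ≥ (0:ℝ), ∃ ν > (0:ℝ), ∃ c > cLow T α d B δ, ∃ Q : ℝ → Vec n → Vec m → ℝ,
    IsRadialSelection T L U Q ∧
    ∀ ρ > (0:ℝ),
      (∃ Inf : ℝ, ∀ s ∈ Icc (0:ℝ) T, ∀ y : Vec n, ‖y‖ ≤ K → ∀ u ∈ U, ‖u‖ < c →
        L s y u ≠ ⊤ → ρ ≤ distBdry T L (s, y, u) → Inf ≤ (L s y u).toReal - Q s y u) ∧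
      (∃ Sup : ℝ, ∀ s ∈ Icc (0:ℝ) T, ∀ y : Vec n, ‖y‖ ≤ K → ∀ u ∈ U, ν ≤ ‖u‖ →
        L s y u ≠ ⊤ → (L s y u).toReal - Q s y u ≤ Sup)

/-- Hypothesis (h₁): the effective domain is a product `[0,T] × D`. -/
def Hyp1 (T : ℝ) (L : ℝ → Vec n → Vec m → ℝ≥0∞) : Prop :=
  ∃ D : Set (Vec n × Vec m), domSet T L = Icc (0:ℝ) T ×ˢ D

/-- Hypothesis (h₂): `L` tends uniformly to `+∞` at the boundary of its domain. -/
def Hyp2 (T : ℝ) (L : ℝ → Vec n → Vec m → ℝ≥0∞) (U : Set (Vec m)) : Prop :=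
  ∀ M : ℝ, ∃ ρ > (0:ℝ), ∀ s ∈ Icc (0:ℝ) T, ∀ y : Vec n, ∀ u ∈ U, L s y u ≠ ⊤ →
    distBdry T L (s, y, u) < ρ → ENNReal.ofReal M ≤ L s y u

/-- The Bolza functional `J_t(y,u)`. -/
def Jfun (T : ℝ) (L : ℝ → Vec n → Vec m → ℝ≥0∞) (g : Vec n → ℝ≥0∞)
    (t : ℝ) (y : ℝ → Vec n) (u : ℝ → Vec m) : ℝ≥0∞ :=
  (∫⁻ s in Icc t T, L s (y s) (u s)) + g (y T)

/-- An admissible pair for problem (P_{t,x}). -/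
def Admissible (T : ℝ) (L : ℝ → Vec n → Vec m → ℝ≥0∞) (U : Set (Vec m))
    (b : Vec n → Vec m →L[ℝ] Vec n) (g : Vec n → ℝ≥0∞) (S : Set (Vec n))
    (t : ℝ) (x : Vec n) (y : ℝ → Vec n) (u : ℝ → Vec m) : Prop :=
  Measurable u ∧ (∀ᵐ s ∂(volume : Measure ℝ), s ∈ Icc t T → u s ∈ U) ∧
  IntegrableOn (fun τ => b (y τ) (u τ)) (Icc t T) ∧
  (∀ s ∈ Icc t T, y s = x + ∫ τ in Icc t s, b (y τ) (u τ)) ∧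
  (∀ s ∈ Icc t T, y s ∈ S) ∧
  Jfun T L g t y u ≠ ⊤

/-- The value `inf (P_{t,x})`. -/
def infP (T : ℝ) (L : ℝ → Vec n → Vec m → ℝ≥0∞) (U : Set (Vec m))
    (b : Vec n → Vec m →L[ℝ] Vec n) (g : Vec n → ℝ≥0∞) (S : Set (Vec n))
    (t : ℝ) (x : Vec n) : ℝ≥0∞ :=
  sInf {v | ∃ y u, Admissible T L U b g S t x y u ∧ Jfun T L g t y u = v}

/-- A minimizing sequence for (P_{t,x}). -/
def MinimizingSeq (T : ℝ) (L : ℝ → Vec n → Vec m → ℝ≥0∞) (U : Set (Vec m))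
    (b : Vec n → Vec m →L[ℝ] Vec n) (g : Vec n → ℝ≥0∞) (S : Set (Vec n))
    (t : ℝ) (x : Vec n) (y : ℕ → ℝ → Vec n) (u : ℕ → ℝ → Vec m) : Prop :=
  (∀ j, Admissible T L U b g S t x (y j) (u j)) ∧
  Tendsto (fun j => Jfun T L g t (y j) (u j)) atTop (nhds (infP T L U b g S t x))

/-- If `(s,y,u)` is in the domain and `v` is strictly closer to `u` than the
distance to the boundary of the domain, then `(s,y,v)` is in the domain. -/
lemma stay_in_dom (T : ℝ) (L : ℝ → Vec n → Vec m → ℝ≥0∞) (s : ℝ)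
    (hs : s ∈ Icc (0:ℝ) T) (y : Vec n) (u v : Vec m) (hu : L s y u ≠ ⊤)
    (hlt : dist v u < distBdry T L (s, y, u)) : L s y v ≠ ⊤ := by
  by_contra hv
  set p : ℝ → ℝ × Vec n × Vec m := fun t => (s, y, u + t • (v - u)) with hp_def
  have hp : Continuous p := by fun_prop
  set A : Set ℝ := {t : ℝ | t ∈ Icc (0:ℝ) 1 ∧ L s y (u + t • (v - u)) ≠ ⊤} with hA_def
  have h0 : (0:ℝ) ∈ A := by
    simp only [hA_def, Set.mem_setOf_eq]
    constructor
    · exact ⟨le_refl _, zero_le_one⟩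
    · simpa using hu
  have hAne : A.Nonempty := ⟨0, h0⟩
  have hAbd : BddAbove A := ⟨1, fun t ht => ht.1.2⟩
  set t₀ : ℝ := sSup A with ht₀_def
  have ht₀mem : t₀ ∈ Icc (0:ℝ) 1 := ⟨le_csSup hAbd h0, csSup_le hAne fun t ht => ht.1.2⟩
  -- p t₀ ∈ closure (domSet T L)
  have hsub1 : A ⊆ p ⁻¹' closure (domSet T L) := by
    intro t ht
    exact subset_closure (show p t ∈ domSet T L from ⟨hs, ht.2⟩)
  have hcl1 : p t₀ ∈ closure (domSet T L) := by
    have h1 : t₀ ∈ closure A := csSup_mem_closure hAne hAbd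
    have h2 : closure A ⊆ p ⁻¹' closure (domSet T L) :=
      closure_minimal hsub1 (isClosed_closure.preimage hp)
    exact h2 h1
  -- p t₀ ∈ closure of the complement part
  have hcl2 : p t₀ ∈ closure ((Icc (0:ℝ) T ×ˢ (univ : Set (Vec n × Vec m))) \ domSet T L) := by
    rcases eq_or_lt_of_le ht₀mem.2 with h1 | h1
    · apply subset_closure
      constructor
      · exact ⟨hs, trivial⟩
      · intro hmem
        apply hmem.2
        simp only [hp_def, h1, one_smul]
        simp [hv]
    · -- t₀ < 1
      have hsub2 : Ioc t₀ 1 ⊆ p ⁻¹' closure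
          ((Icc (0:ℝ) T ×ˢ (univ : Set (Vec n × Vec m))) \ domSet T L) := by
        intro t ht
        apply subset_closure
        have htA : t ∉ A := fun h => absurd (le_csSup hAbd h) (not_le.mpr ht.1)
        have htIcc : t ∈ Icc (0:ℝ) 1 := ⟨le_trans ht₀mem.1 (le_of_lt ht.1), ht.2⟩
        have hLtop : L s y (u + t • (v - u)) = ⊤ := by
          by_contra h
          exact htA ⟨htIcc, h⟩
        constructor
        · exact ⟨hs, trivial⟩
        · intro hmem
          exact hmem.2 hLtop
      have h3 : t₀ ∈ closure (Ioc t₀ 1) := by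
        rw [closure_Ioc (ne_of_lt h1)]
        exact ⟨le_refl _, le_of_lt h1⟩
      have h4 : closure (Ioc t₀ 1) ⊆ p ⁻¹' closure
          ((Icc (0:ℝ) T ×ˢ (univ : Set (Vec n × Vec m))) \ domSet T L) :=
        closure_minimal hsub2 (isClosed_closure.preimage hp)
      exact h4 h3
  have hbd : p t₀ ∈ bdryDom T L := ⟨hcl1, hcl2⟩
  have hle : distBdry T L (s, y, u) ≤ dist (s, y, u) (p t₀) :=
    Metric.infDist_le_dist_of_mem hbd
  have hd : dist ((s, y, u) : ℝ × Vec n × Vec m) (p t₀) ≤ dist v u := by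
    have h6 : dist u (u + t₀ • (v - u)) = |t₀| * ‖v - u‖ := by
      rw [dist_eq_norm]
      simp [norm_smul]
    have h5 : |t₀| * ‖v - u‖ ≤ ‖v - u‖ := by
      have := mul_le_mul_of_nonneg_right
        (show |t₀| ≤ 1 by rw [abs_of_nonneg ht₀mem.1]; exact ht₀mem.2) (norm_nonneg (v - u))
      simpa using this
    have h7 : dist v u = ‖v - u‖ := dist_eq_norm v u
    simp only [hp_def, Prod.dist_eq, dist_self]
    rw [h6, h7]
    have := norm_nonneg (v - u)
    refine max_le (by linarith) (max_le (by linarith) (by linarith))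
  linarith [lt_of_le_of_lt (hle.trans hd) hlt]

/-- finiteness of the infimum well-inside the domain. -/
theorem stmt_5 (T : ℝ) (hT : 0 < T) (n m : ℕ)
    (L : ℝ → Vec n → Vec m → ℝ≥0∞)
    (hmeas : Measurable fun p : ℝ × Vec n × Vec m => L p.1 p.2.1 p.2.2)
    (U : Set (Vec m)) (hU : IsCone U)
    (hconv : RadiallyConvex T L U)
    (hbdd : BddWellInside T L)
    (Q : ℝ → Vec n → Vec m → ℝ) (hQ : IsRadialSelection T L U Q)
    (c ρ K : ℝ) (hc : 0 < c) (hρ : 0 < ρ) (hK : 0 ≤ K) :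
    ∃ I : ℝ, ∀ s ∈ Icc (0:ℝ) T, ∀ y : Vec n, ‖y‖ ≤ K → ∀ u ∈ U, ‖u‖ < c →
      L s y u ≠ ⊤ → ρ ≤ distBdry T L (s, y, u) → I ≤ (L s y u).toReal - Q s y u := by
  obtain ⟨c', hc'1, hcc'⟩ : ∃ x : ℝ, 1 ≤ x ∧ c ≤ x :=
    ⟨max c 1, le_max_right _ _, le_max_left _ _⟩
  have hc'0 : (0:ℝ) < c' := lt_of_lt_of_le one_pos hc'1
  obtain ⟨r, hr_def⟩ : ∃ x : ℝ, x = 1 + ρ / (2 * c') := ⟨_, rfl⟩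
  have hr1 : 1 < r := by
    have : 0 < ρ / (2 * c') := div_pos hρ (by linarith)
    linarith
  have hr0 : 0 < r := by linarith
  obtain ⟨M, hM⟩ := hbdd (K + c' + ρ) (by linarith) (ρ / 2) (by linarith)
  refine ⟨-(max M 0 * (2 * c' / ρ)), ?_⟩
  intro s hs y hy u hUu hu hfin hdist
  -- distance from (s,y,u) to (s,y,r•u)
  have hdvu : dist (r • u) u ≤ ρ / 2 := by
    have h1 : dist (r • u) u = (r - 1) * ‖u‖ := by
      rw [dist_eq_norm]
      have : r • u - u = (r - 1) • u := by rw [sub_smul, one_smul]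
      rw [this, norm_smul, Real.norm_eq_abs, abs_of_nonneg (by linarith)]
    rw [h1]
    have h2 : r - 1 = ρ / (2 * c') := by rw [hr_def]; ring
    rw [h2]
    have h3 : ‖u‖ ≤ c' := le_trans (le_of_lt hu) hcc'
    have h4 : ρ / (2 * c') * ‖u‖ ≤ ρ / (2 * c') * c' :=
      mul_le_mul_of_nonneg_left h3 (le_of_lt (div_pos hρ (by linarith)))
    calc ρ / (2 * c') * ‖u‖ ≤ ρ / (2 * c') * c' := h4
      _ = ρ / 2 := by field_simp
  -- L s y (r • u) is finite
  have hfin2 : L s y (r • u) ≠ ⊤ := by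
    apply stay_in_dom T L s hs y u (r • u) hfin
    exact lt_of_le_of_lt hdvu (by linarith)
  -- distance of the scaled point to the boundary
  have hdist2 : ρ / 2 ≤ distBdry T L (s, y, r • u) := by
    have h1 := Metric.infDist_le_infDist_add_dist
      (x := ((s, y, u) : ℝ × Vec n × Vec m)) (y := ((s, y, r • u) : ℝ × Vec n × Vec m))
      (s := bdryDom T L)
    have h2 : dist ((s, y, u) : ℝ × Vec n × Vec m) ((s, y, r • u) : ℝ × Vec n × Vec m)
        ≤ ρ / 2 := by
      have : dist u (r • u) = dist (r • u) u := dist_comm _ _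
      simp only [Prod.dist_eq, dist_self]
      refine max_le (by linarith) (max_le (by linarith) ?_)
      rw [this]; exact hdvu
    have h3 : distBdry T L (s, y, u) ≤ distBdry T L (s, y, r • u) + ρ / 2 := by
      calc distBdry T L (s, y, u) ≤ distBdry T L (s, y, r • u) +
            dist ((s, y, u) : ℝ × Vec n × Vec m) ((s, y, r • u) : ℝ × Vec n × Vec m) := h1
        _ ≤ distBdry T L (s, y, r • u) + ρ / 2 := by linarith
    linarith
  -- apply the boundedness hypothesis at the scaled point
  have hnorm : ‖y‖ + ‖r • u‖ ≤ K + c' + ρ := by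
    have h1 : ‖r • u‖ = r * ‖u‖ := by
      rw [norm_smul, Real.norm_eq_abs, abs_of_nonneg (le_of_lt hr0)]
    have h2 : ‖u‖ ≤ c' := le_trans (le_of_lt hu) hcc'
    have h3 : r * ‖u‖ ≤ r * c' := mul_le_mul_of_nonneg_left h2 (le_of_lt hr0)
    have h4 : r * c' = c' + ρ / 2 := by rw [hr_def]; field_simp
    rw [h1]
    nlinarith
  have hLM : L s y (r • u) ≤ ENNReal.ofReal M := hM s hs y (r • u) hfin2 hnorm hdist2
  have hLM' : (L s y (r • u)).toReal ≤ max M 0 := by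
    rcases le_or_gt M 0 with h | h
    · have : L s y (r • u) = 0 := le_antisymm
        (le_trans hLM (by simp [ENNReal.ofReal_eq_zero.mpr h])) zero_le
      simp [this, le_max_right]
    · have := ENNReal.toReal_mono (ENNReal.ofReal_ne_top) hLM
      rw [ENNReal.toReal_ofReal (le_of_lt h)] at this
      exact le_trans this (le_max_left _ _)
  -- apply the radial selection inequality at r
  have hsel := hQ s hs y u hUu hfin r hr0
  have hkey : (L s y u).toReal + Q s y u * (r - 1) ≤ max M 0 := by
    have h1 : (L s y u).toReal + Q s y u * (r - 1) ≤ (L s y (r • u)).toReal := by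
      rcases le_or_gt ((L s y u).toReal + Q s y u * (r - 1)) 0 with h | h
      · exact le_trans h ENNReal.toReal_nonneg
      · have h2 := ENNReal.toReal_mono hfin2 hsel
        rwa [ENNReal.toReal_ofReal (le_of_lt h)] at h2
    linarith
  -- conclude
  have hQle : Q s y u ≤ max M 0 * (2 * c' / ρ) := by
    have hr1' : r - 1 = ρ / (2 * c') := by rw [hr_def]; ring
    have hLnn : (0:ℝ) ≤ (L s y u).toReal := ENNReal.toReal_nonneg
    have h1 : Q s y u * (r - 1) ≤ max M 0 := by linarith
    rw [hr1'] at h1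
    have h2 : (0:ℝ) < ρ / (2 * c') := div_pos hρ (by linarith)
    have h3 : Q s y u ≤ max M 0 / (ρ / (2 * c')) := (le_div_iff₀ h2).mpr h1
    have h4 : max M 0 / (ρ / (2 * c')) = max M 0 * (2 * c' / ρ) := by
      field_simp
    linarith [h3, h4.le, h4.ge]
  have hLnn : (0:ℝ) ≤ (L s y u).toReal := ENNReal.toReal_nonneg
  linarith
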